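/- Let K ≥ 2 be a natural number and let a₁, …, a_K be positive real numbers. Let S = {x ∈ ℝ^{K−1} : xᵢ > 0 for all i, and x₁ + ⋯ + x_{K−1} < 1}. Then ∫_S (∏_{i=1}^{K−1} xᵢ^{aᵢ−1}) · (1 − Σ_{i=1}^{K−1} xᵢ)^{a_K−1} dx = (∏_{k=1}^K Γ(a_k)) / Γ(a₁ + ⋯ + a_K), where Γ denotes the Gamma function and the integral is with respect to Lebesgue measure on ℝ^{K−1}. -/

import Mathlib

open MeasureTheory BigOperators

open scoped ENNReal

section DirichletAux

open Set intervalIntegral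

lemma betaIntegrable {u v s : ℝ} (hu : 0 < u) (hv : 0 < v) (hs : 0 < s) :
    IntervalIntegrable (fun t => t ^ (u - 1) * (s - t) ^ (v - 1)) volume 0 s := by
  have half : ∀ u v : ℝ, 0 < u →
      IntervalIntegrable (fun t => t ^ (u - 1) * (s - t) ^ (v - 1)) volume 0 (s / 2) := by
    intro u v hu
    apply IntervalIntegrable.mul_continuousOn
    · exact intervalIntegral.intervalIntegrable_rpow' (by linarith)
    · apply continuousOn_of_forall_continuousAt
      intro t ht
      rw [uIcc_of_le (by positivity : (0:ℝ) ≤ s / 2), Set.mem_Icc] at ht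
      have hne : s - t ≠ 0 := by intro h; nlinarith [ht.2]
      exact (Real.continuousAt_rpow_const _ _ (Or.inl hne)).comp
        ((continuous_const.sub continuous_id).continuousAt)
  have h2 := ((half v u hv).comp_sub_left s)
  have h2' : IntervalIntegrable (fun t => t ^ (u - 1) * (s - t) ^ (v - 1)) volume (s/2) s := by
    have he : (fun t : ℝ => (s - t) ^ (v - 1) * (s - (s - t)) ^ (u - 1))
        = fun t => t ^ (u - 1) * (s - t) ^ (v - 1) := by
      funext t; rw [sub_sub_cancel]; ring
    rw [he, show s - s/2 = s/2 by ring, show s - 0 = s by ring] at h2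
    exact h2.symm
  exact (half u v hu).trans h2'

lemma betaValue {u v s : ℝ} (hu : 0 < u) (hv : 0 < v) (hs : 0 < s) :
    ∫ t in (0:ℝ)..s, t ^ (u - 1) * (s - t) ^ (v - 1)
      = s ^ (u + v - 1) * (Real.Gamma u * Real.Gamma v / Real.Gamma (u + v)) := by
  have hC : ∫ t in (0:ℝ)..s, ((t:ℂ) ^ ((u:ℂ) - 1) * ((s:ℂ) - t) ^ ((v:ℂ) - 1))
      = (s:ℂ) ^ ((u:ℂ) + v - 1) * Complex.betaIntegral u v :=
    Complex.betaIntegral_scaled u v hs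
  have hne : Complex.Gamma ((u:ℂ) + v) ≠ 0 := by
    rw [show ((u:ℂ) + v) = ((u + v : ℝ) : ℂ) by push_cast; ring, Complex.Gamma_ofReal]
    exact_mod_cast (Real.Gamma_pos_of_pos (by linarith : (0:ℝ) < u + v)).ne'
  have hGam : Complex.betaIntegral u v
      = (Complex.Gamma ((u:ℂ) + v))⁻¹ * (Complex.Gamma u * Complex.Gamma v) := by
    rw [eq_inv_mul_iff_mul_eq₀ hne]
    exact (Complex.Gamma_mul_Gamma_eq_betaIntegral
      (s := (u:ℂ)) (t := (v:ℂ)) (by simpa using hu) (by simpa using hv)).symm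
  have heq : ∫ t in (0:ℝ)..s, ((t:ℂ) ^ ((u:ℂ) - 1) * ((s:ℂ) - t) ^ ((v:ℂ) - 1))
      = ((∫ t in (0:ℝ)..s, t ^ (u - 1) * (s - t) ^ (v - 1) : ℝ) : ℂ) := by
    rw [← intervalIntegral.integral_ofReal]
    refine intervalIntegral.integral_congr fun t ht => ?_
    rw [uIcc_of_le hs.le, Set.mem_Icc] at ht
    show (t:ℂ) ^ ((u:ℂ) - 1) * ((s:ℂ) - (t:ℂ)) ^ ((v:ℂ) - 1)
        = ((t ^ (u - 1) * (s - t) ^ (v - 1) : ℝ) : ℂ)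
    rw [show ((u:ℂ) - 1) = ((u - 1 : ℝ) : ℂ) by push_cast; ring,
      show ((v:ℂ) - 1) = ((v - 1 : ℝ) : ℂ) by push_cast; ring,
      show ((s:ℂ) - (t:ℂ)) = ((s - t : ℝ) : ℂ) by push_cast; ring,
      ← Complex.ofReal_cpow ht.1, ← Complex.ofReal_cpow (by linarith [ht.2] : (0:ℝ) ≤ s - t)]
    push_cast
    ring
  have key := heq.symm.trans hC
  rw [hGam] at key
  have hrhs : (s:ℂ) ^ ((u:ℂ) + v - 1) * ((Complex.Gamma ((u:ℂ) + v))⁻¹ * (Complex.Gamma u * Complex.Gamma v))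
      = ((s ^ (u + v - 1) * (Real.Gamma u * Real.Gamma v / Real.Gamma (u + v)) : ℝ) : ℂ) := by
    have h1 : (s:ℂ) ^ ((u:ℂ) + v - 1) = ((s ^ (u + v - 1) : ℝ) : ℂ) := by
      rw [show ((u:ℂ) + v - 1) = ((u + v - 1 : ℝ) : ℂ) by push_cast; ring,
        ← Complex.ofReal_cpow hs.le]
    have h2 : Complex.Gamma ((u:ℂ) + v) = ((Real.Gamma (u + v) : ℝ) : ℂ) := by
      rw [show ((u:ℂ) + v) = ((u + v : ℝ) : ℂ) by push_cast; ring, Complex.Gamma_ofReal]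
    rw [h1, h2, Complex.Gamma_ofReal, Complex.Gamma_ofReal]
    push_cast
    ring
  rw [hrhs] at key
  exact_mod_cast key

lemma betaLintegral {u v s : ℝ} (hu : 0 < u) (hv : 0 < v) (hs : 0 < s) :
    ∫⁻ t in Set.Ioo (0:ℝ) s, ENNReal.ofReal (t ^ (u - 1) * (s - t) ^ (v - 1))
      = ENNReal.ofReal (s ^ (u + v - 1) * (Real.Gamma u * Real.Gamma v / Real.Gamma (u + v))) := by
  have hInt : IntegrableOn (fun t => t ^ (u - 1) * (s - t) ^ (v - 1)) (Set.Ioc 0 s) volume := by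
    have h := betaIntegrable hu hv hs
    rwa [intervalIntegrable_iff_integrableOn_Ioc_of_le hs.le] at h
  have hnn : 0 ≤ᶠ[ae (volume.restrict (Set.Ioc (0:ℝ) s))]
      fun t => t ^ (u - 1) * (s - t) ^ (v - 1) := by
    refine (ae_restrict_iff' measurableSet_Ioc).2 (Filter.Eventually.of_forall fun t ht => ?_)
    exact mul_nonneg (Real.rpow_nonneg ht.1.le _) (Real.rpow_nonneg (sub_nonneg.2 ht.2) _)
  rw [Measure.restrict_congr_set Ioo_ae_eq_Ioc,
    ← ofReal_integral_eq_lintegral_ofReal hInt hnn,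
    ← intervalIntegral.integral_of_le hs.le, betaValue hu hv hs]
lemma simplex_measurable (n : ℕ) :
    MeasurableSet {x : Fin n → ℝ | (∀ i, 0 < x i) ∧ ∑ i, x i < 1} := by
  have h : {x : Fin n → ℝ | (∀ i, 0 < x i) ∧ ∑ i, x i < 1}
      = (⋂ i, {x | 0 < x i}) ∩ {x | ∑ i, x i < 1} := by
    ext x; simp [Set.mem_iInter]
  rw [h]
  exact (MeasurableSet.iInter fun i =>
      measurableSet_lt measurable_const (measurable_pi_apply i)).inter
    (measurableSet_lt (Finset.measurable_sum _ fun i _ => measurable_pi_apply i) measurable_const)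

lemma dirichlet_meas (n : ℕ) (c : Fin n → ℝ) (d : ℝ) :
    Measurable fun x : Fin n → ℝ => (∏ i, x i ^ (c i - 1)) * (1 - ∑ i, x i) ^ (d - 1) :=
  (Finset.measurable_prod _ fun i _ => (measurable_pi_apply i).pow_const _).mul
    ((measurable_const.sub (Finset.measurable_sum _ fun i _ => measurable_pi_apply i)).pow_const _)

lemma dirichlet_lintegral (n : ℕ) (a : Fin (n + 1) → ℝ) (ha : ∀ k, 0 < a k) :
    ∫⁻ x in {x : Fin n → ℝ | (∀ i, 0 < x i) ∧ ∑ i, x i < 1},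
        ENNReal.ofReal ((∏ i : Fin n, x i ^ (a i.castSucc - 1)) *
          (1 - ∑ i, x i) ^ (a (Fin.last n) - 1))
      = ENNReal.ofReal ((∏ k, Real.Gamma (a k)) / Real.Gamma (∑ k, a k)) := by
  induction n with
  | zero =>
      have hset : {x : Fin 0 → ℝ | (∀ i, 0 < x i) ∧ ∑ i, x i < 1} = Set.univ := by
        ext x; simp
      rw [hset, Measure.restrict_univ]
      have h1 : (∏ k, Real.Gamma (a k)) / Real.Gamma (∑ k, a k) = 1 := by
        rw [Fin.prod_univ_one, Fin.sum_univ_one, div_self (Real.Gamma_pos_of_pos (ha 0)).ne']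
      rw [h1]
      simp only [Finset.univ_eq_empty, Finset.prod_empty, Finset.sum_empty, sub_zero,
        Real.one_rpow, one_mul, ENNReal.ofReal_one, lintegral_const, one_mul]
      rw [MeasureTheory.volume_pi, Measure.pi_univ]
      simp
  | succ n ih =>
      -- notation
      set u : ℝ := a ((Fin.last n).castSucc) with hu_def
      set v : ℝ := a (Fin.last (n + 1)) with hv_def
      have hu : 0 < u := ha _
      have hv : 0 < v := ha _
      have huv : 0 < u + v := by linarith
      set b : Fin (n + 1) → ℝ :=
        Fin.snoc (fun i : Fin n => a i.castSucc.castSucc) (u + v) with hb_def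
      have hb : ∀ k, 0 < b k := by
        intro k
        induction k using Fin.lastCases with
        | last => rw [hb_def]; simp only [Fin.snoc_last]; linarith
        | cast i => rw [hb_def]; simp only [Fin.snoc_castSucc]; exact ha _
      set S : Set (Fin (n + 1) → ℝ) := {x | (∀ i, 0 < x i) ∧ ∑ i, x i < 1} with hS_def
      set Sn : Set (Fin n → ℝ) := {y | (∀ i, 0 < y i) ∧ ∑ i, y i < 1} with hSn_def
      have hS : MeasurableSet S := simplex_measurable (n + 1)
      have hSn : MeasurableSet Sn := simplex_measurable n
      set f : (Fin (n + 1) → ℝ) → ℝ :=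
        fun x => (∏ i : Fin (n + 1), x i ^ (a i.castSucc - 1)) * (1 - ∑ i, x i) ^ (v - 1)
        with hf_def
      have hfmeas : Measurable f := dirichlet_meas (n + 1) (fun i => a i.castSucc) v
      set F : (Fin (n + 1) → ℝ) → ℝ≥0∞ := S.indicator (fun x => ENNReal.ofReal (f x)) with hF_def
      have hFmeas : Measurable F :=
        (ENNReal.measurable_ofReal.comp hfmeas).indicator hS
      -- split off the last coordinate
      set e := MeasurableEquiv.piFinSuccAbove (fun _ : Fin (n + 1) => ℝ) (Fin.last n) with he_def
      have hesymm : ∀ (t : ℝ) (y : Fin n → ℝ), e.symm (t, y) = Fin.snoc y t := by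
        intro t y
        simp [he_def, MeasurableEquiv.piFinSuccAbove, Fin.insertNthEquiv]
      have hmp : MeasurePreserving e.symm
          (volume : Measure (ℝ × (Fin n → ℝ))) (volume : Measure (Fin (n + 1) → ℝ)) :=
        (volume_preserving_piFinSuccAbove (fun _ : Fin (n + 1) => ℝ) (Fin.last n)).symm
      have step1 : ∫⁻ x in S, ENNReal.ofReal (f x) = ∫⁻ x, F x := by
        rw [hF_def, lintegral_indicator hS]
      have step2 : ∫⁻ x, F x = ∫⁻ p : ℝ × (Fin n → ℝ), F (e.symm p) :=
        (hmp.lintegral_comp hFmeas).symm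
      have step3 : ∫⁻ p : ℝ × (Fin n → ℝ), F (e.symm p)
          = ∫⁻ y : Fin n → ℝ, ∫⁻ t : ℝ, F (Fin.snoc y t) := by
        rw [MeasureTheory.Measure.volume_eq_prod,
          lintegral_prod_symm (fun p : ℝ × (Fin n → ℝ) => F (e.symm p))
            (Measurable.aemeasurable (hFmeas.comp e.symm.measurable))]
        refine lintegral_congr fun y => lintegral_congr fun t => ?_
        rw [hesymm]
      -- the inner integral
      have key : ∀ y : Fin n → ℝ, ∫⁻ t : ℝ, F (Fin.snoc y t)
          = Sn.indicator (fun y =>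
              ENNReal.ofReal (Real.Gamma u * Real.Gamma v / Real.Gamma (u + v)) *
              ENNReal.ofReal ((∏ i : Fin n, y i ^ (b i.castSucc - 1)) *
                (1 - ∑ i, y i) ^ (b (Fin.last n) - 1))) y := by
        intro y
        have hsum : ∀ t : ℝ, ∑ i, Fin.snoc y t i = ∑ i, y i + t := by
          intro t
          rw [Fin.sum_univ_castSucc]
          simp [Fin.snoc_castSucc, Fin.snoc_last]
        have hprod : ∀ t : ℝ, (∏ i : Fin (n + 1), Fin.snoc y t i ^ (a i.castSucc - 1))
            = (∏ i : Fin n, y i ^ (a i.castSucc.castSucc - 1)) * t ^ (u - 1) := by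
          intro t
          rw [Fin.prod_univ_castSucc]
          simp [Fin.snoc_castSucc, Fin.snoc_last, hu_def]
        by_cases hy : y ∈ Sn
        · set s' : ℝ := 1 - ∑ i, y i with hs'_def
          have hs' : 0 < s' := by
            rw [hs'_def]; rw [hSn_def] at hy; exact sub_pos.mpr hy.2
          have hmem : ∀ t : ℝ, (Fin.snoc y t ∈ S) ↔ t ∈ Set.Ioo 0 s' := by
            intro t
            constructor
            · rintro ⟨h1, h2⟩
              have ht0 : 0 < t := by
                have := h1 (Fin.last n); rwa [Fin.snoc_last] at this
              rw [hsum] at h2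
              exact ⟨ht0, by rw [hs'_def]; linarith⟩
            · rintro ⟨ht0, hts⟩
              rw [hs'_def] at hts
              refine ⟨?_, by rw [hsum]; linarith⟩
              intro i
              induction i using Fin.lastCases with
              | last => rwa [Fin.snoc_last]
              | cast j => rw [Fin.snoc_castSucc]; exact hy.1 j
          set C : ℝ := ∏ i : Fin n, y i ^ (a i.castSucc.castSucc - 1) with hC_def
          have hC : 0 ≤ C := by
            rw [hC_def]
            exact Finset.prod_nonneg fun i _ => Real.rpow_nonneg (hy.1 i).le _
          have hFt : ∀ t : ℝ, F (Fin.snoc y t)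
              = (Set.Ioo 0 s').indicator
                  (fun t => ENNReal.ofReal (C * (t ^ (u - 1) * (s' - t) ^ (v - 1)))) t := by
            intro t
            rw [hF_def, Set.indicator_apply, Set.indicator_apply]
            by_cases ht : t ∈ Set.Ioo 0 s'
            · rw [if_pos ((hmem t).mpr ht), if_pos ht, hf_def]
              simp only
              rw [hprod, hsum]
              have hbase : 1 - (∑ i, y i + t) = s' - t := by rw [hs'_def]; ring
              rw [hbase, hC_def, mul_assoc]
            · rw [if_neg (fun h => ht ((hmem t).mp h)), if_neg ht]
          calc ∫⁻ t : ℝ, F (Fin.snoc y t)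
              = ∫⁻ t in Set.Ioo 0 s',
                  ENNReal.ofReal (C * (t ^ (u - 1) * (s' - t) ^ (v - 1))) := by
                rw [lintegral_congr hFt, lintegral_indicator measurableSet_Ioo]
            _ = ∫⁻ t in Set.Ioo 0 s',
                  ENNReal.ofReal C * ENNReal.ofReal (t ^ (u - 1) * (s' - t) ^ (v - 1)) := by
                refine lintegral_congr fun t => ?_
                rw [ENNReal.ofReal_mul hC]
            _ = ENNReal.ofReal C *
                  ∫⁻ t in Set.Ioo 0 s', ENNReal.ofReal (t ^ (u - 1) * (s' - t) ^ (v - 1)) := by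
                rw [lintegral_const_mul]
                exact ENNReal.measurable_ofReal.comp
                  (((measurable_id.pow_const _)).mul
                    ((measurable_const.sub measurable_id).pow_const _))
            _ = ENNReal.ofReal C *
                  ENNReal.ofReal (s' ^ (u + v - 1) *
                    (Real.Gamma u * Real.Gamma v / Real.Gamma (u + v))) := by
                rw [betaLintegral hu hv hs']
            _ = Sn.indicator (fun y =>
                  ENNReal.ofReal (Real.Gamma u * Real.Gamma v / Real.Gamma (u + v)) *
                  ENNReal.ofReal ((∏ i : Fin n, y i ^ (b i.castSucc - 1)) *
                    (1 - ∑ i, y i) ^ (b (Fin.last n) - 1))) y := by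
                rw [Set.indicator_of_mem hy]
                have h1 : ∀ i : Fin n, b i.castSucc = a i.castSucc.castSucc := by
                  intro i; rw [hb_def]; simp [Fin.snoc_castSucc]
                have h2 : b (Fin.last n) = u + v := by rw [hb_def]; simp [Fin.snoc_last]
                simp only [h1, h2]
                rw [← hC_def, ← hs'_def,
                  ← ENNReal.ofReal_mul hC, ← ENNReal.ofReal_mul (by positivity)]
                congr 1
                ring
        · -- y ∉ Sn : everything vanishes
          rw [Set.indicator_of_notMem hy]
          have hzero : ∀ t : ℝ, F (Fin.snoc y t) = 0 := by
            intro t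
            rw [hF_def, Set.indicator_apply, if_neg]
            intro hmem
            apply hy
            rw [hSn_def]
            obtain ⟨h1, h2⟩ := hmem
            have ht0 : 0 < t := by
              have := h1 (Fin.last n); rwa [Fin.snoc_last] at this
            rw [hsum] at h2
            refine ⟨fun i => ?_, by linarith⟩
            have := h1 i.castSucc; rwa [Fin.snoc_castSucc] at this
          simp [hzero]
      -- put everything together
      rw [step1, step2, step3]
      calc ∫⁻ y : Fin n → ℝ, ∫⁻ t : ℝ, F (Fin.snoc y t)
          = ∫⁻ y in Sn,
              ENNReal.ofReal (Real.Gamma u * Real.Gamma v / Real.Gamma (u + v)) *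
              ENNReal.ofReal ((∏ i : Fin n, y i ^ (b i.castSucc - 1)) *
                (1 - ∑ i, y i) ^ (b (Fin.last n) - 1)) := by
            rw [lintegral_congr key, lintegral_indicator hSn]
        _ = ENNReal.ofReal (Real.Gamma u * Real.Gamma v / Real.Gamma (u + v)) *
              ∫⁻ y in Sn, ENNReal.ofReal ((∏ i : Fin n, y i ^ (b i.castSucc - 1)) *
                (1 - ∑ i, y i) ^ (b (Fin.last n) - 1)) := by
            rw [lintegral_const_mul]
            exact ENNReal.measurable_ofReal.comp (dirichlet_meas n (fun i => b i.castSucc) _)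
        _ = ENNReal.ofReal (Real.Gamma u * Real.Gamma v / Real.Gamma (u + v)) *
              ENNReal.ofReal ((∏ k, Real.Gamma (b k)) / Real.Gamma (∑ k, b k)) := by
            rw [ih b hb]
        _ = ENNReal.ofReal ((∏ k, Real.Gamma (a k)) / Real.Gamma (∑ k, a k)) := by
            rw [← ENNReal.ofReal_mul (div_nonneg (mul_nonneg (Real.Gamma_pos_of_pos hu).le (Real.Gamma_pos_of_pos hv).le) (Real.Gamma_pos_of_pos huv).le)]
            congr 1
            have hsumb : ∑ k, b k = ∑ k, a k := by
              rw [Fin.sum_univ_castSucc (f := b), Fin.sum_univ_castSucc (f := a),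
                Fin.sum_univ_castSucc (f := fun i : Fin (n + 1) => a i.castSucc)]
              simp only [hb_def, Fin.snoc_castSucc, Fin.snoc_last]
              ring
            have hprodb : ∏ k, Real.Gamma (b k)
                = (∏ i : Fin n, Real.Gamma (a i.castSucc.castSucc)) * Real.Gamma (u + v) := by
              rw [Fin.prod_univ_castSucc (f := fun k => Real.Gamma (b k))]
              simp only [hb_def, Fin.snoc_castSucc, Fin.snoc_last]
            have hproda : ∏ k, Real.Gamma (a k)
                = (∏ i : Fin n, Real.Gamma (a i.castSucc.castSucc)) *
                  Real.Gamma u * Real.Gamma v := by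
              rw [Fin.prod_univ_castSucc (f := fun k => Real.Gamma (a k)),
                Fin.prod_univ_castSucc (f := fun i : Fin (n + 1) => Real.Gamma (a i.castSucc))]
            rw [hsumb, hprodb, hproda]
            have hGuv : Real.Gamma (u + v) ≠ 0 := (Real.Gamma_pos_of_pos huv).ne'
            have hsums : 0 < ∑ k, a k :=
              Finset.sum_pos (fun k _ => ha k) Finset.univ_nonempty
            have hGs : Real.Gamma (∑ k, a k) ≠ 0 := (Real.Gamma_pos_of_pos hsums).ne'
            rw [div_mul_div_comm, div_eq_div_iff (mul_ne_zero hGuv hGs) hGs]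
            ring

end DirichletAux

/-- Normalizing constant of the Dirichlet distribution: for positive parameters
`a₁, …, a_K` (`K ≥ 2`), the Dirichlet integral over the open simplex in `ℝ^{K−1}`
equals `(∏ₖ Γ(aₖ)) / Γ(∑ₖ aₖ)`. -/
theorem stmt_10 (K : ℕ) (hK : 2 ≤ K) (a : Fin K → ℝ) (ha : ∀ k, 0 < a k) :
    (∫ x in {x : Fin (K - 1) → ℝ | (∀ i, 0 < x i) ∧ ∑ i, x i < 1},
        (∏ i : Fin (K - 1), x i ^ (a (Fin.castLE (Nat.sub_le K 1) i) - 1)) *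
          (1 - ∑ i, x i) ^ (a ⟨K - 1, by omega⟩ - 1))
      = (∏ k, Real.Gamma (a k)) / Real.Gamma (∑ k, a k) := by
  obtain ⟨n, rfl⟩ : ∃ n, K = n + 1 := ⟨K - 1, by omega⟩
  have hcast : ∀ i : Fin (n + 1 - 1), Fin.castLE (Nat.sub_le (n + 1) 1) i = Fin.castSucc i :=
    fun i => rfl
  have hlast : (⟨n + 1 - 1, by omega⟩ : Fin (n + 1)) = Fin.last n := rfl
  simp only [hcast, hlast]
  show (∫ x in {x : Fin n → ℝ | (∀ i, 0 < x i) ∧ ∑ i, x i < 1},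
      (∏ i : Fin n, x i ^ (a i.castSucc - 1)) * (1 - ∑ i, x i) ^ (a (Fin.last n) - 1))
    = (∏ k, Real.Gamma (a k)) / Real.Gamma (∑ k, a k)
  have hS := simplex_measurable n
  have hnn : 0 ≤ᵐ[volume.restrict {x : Fin n → ℝ | (∀ i, 0 < x i) ∧ ∑ i, x i < 1}]
      fun x => (∏ i : Fin n, x i ^ (a i.castSucc - 1)) *
        (1 - ∑ i, x i) ^ (a (Fin.last n) - 1) := by
    refine (ae_restrict_iff' hS).2 (Filter.Eventually.of_forall fun x hx => ?_)
    exact mul_nonneg (Finset.prod_nonneg fun i _ => Real.rpow_nonneg (hx.1 i).le _)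
      (Real.rpow_nonneg (sub_nonneg.2 hx.2.le) _)
  rw [integral_eq_lintegral_of_nonneg_ae hnn
    ((dirichlet_meas n (fun i => a i.castSucc) (a (Fin.last n))).aestronglyMeasurable),
    dirichlet_lintegral n a ha, ENNReal.toReal_ofReal]
  exact div_nonneg (Finset.prod_nonneg fun k _ => (Real.Gamma_pos_of_pos (ha k)).le)
    (Real.Gamma_pos_of_pos (Finset.sum_pos (fun k _ => ha k) Finset.univ_nonempty)).le
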